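/- Let ζ ∈ (0,1). Every accumulation point of 𝒵 lies on the unit circle: if z belongs to the closure of 𝒵 but z ∉ 𝒵, then |z| = 1. -/

import Mathlib

/-- The pair `(P_n, Q_n)` of polynomials defined by `P_0 = Q_0 = 1`,
`P_{n+1} = (ζ Q_n + X P_n)²`, `Q_{n+1} = (Q_n + ζ X P_n)²`. -/
noncomputable def PQ (ζ : ℝ) : ℕ → Polynomial ℂ × Polynomial ℂ
  | 0 => (1, 1)
  | n + 1 =>
    (((ζ : ℂ) • (PQ ζ n).2 + Polynomial.X * (PQ ζ n).1) ^ 2,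
     ((PQ ζ n).2 + (ζ : ℂ) • (Polynomial.X * (PQ ζ n).1)) ^ 2)

noncomputable def Ppoly (ζ : ℝ) (n : ℕ) : Polynomial ℂ := (PQ ζ n).1

noncomputable def Qpoly (ζ : ℝ) (n : ℕ) : Polynomial ℂ := (PQ ζ n).2

/-- `R_n = ζ·X·P_n + Q_n`. -/
noncomputable def Rpoly (ζ : ℝ) (n : ℕ) : Polynomial ℂ :=
  (ζ : ℂ) • (Polynomial.X * Ppoly ζ n) + Qpoly ζ n

/-- `𝒵_n`, the set of complex roots of `R_n`. -/
def Zset (ζ : ℝ) (n : ℕ) : Set ℂ := {z : ℂ | (Rpoly ζ n).eval z = 0}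

/-- `𝒵 = ⋃ₙ 𝒵_n`. -/
def ZsetAll (ζ : ℝ) : Set ℂ := ⋃ n : ℕ, Zset ζ n

open Complex Polynomial

noncomputable def Complex.abs : AbsoluteValue ℂ ℝ := NormedField.toAbsoluteValue ℂ

lemma Complex.abs_eq_norm' (z : ℂ) : Complex.abs z = ‖z‖ := rfl

@[simp] lemma Complex.abs_conj (z : ℂ) : Complex.abs ((starRingEnd ℂ) z) = Complex.abs z := by
  simp [Complex.abs_eq_norm']

@[simp] lemma Complex.abs_ofReal (r : ℝ) : Complex.abs (r : ℂ) = |r| := by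
  simp [Complex.abs_eq_norm']

lemma Complex.sq_abs (z : ℂ) : Complex.abs z ^ 2 = normSq z := by
  rw [Complex.abs_eq_norm', Complex.sq_norm]

lemma Complex.abs_apply (z : ℂ) : Complex.abs z = Real.sqrt (normSq z) := by
  rw [Complex.abs_eq_norm', ← Complex.sq_norm, Real.sqrt_sq (norm_nonneg z)]

lemma Complex.continuous_abs : Continuous Complex.abs := continuous_norm

lemma Complex.abs_re_le_abs (z : ℂ) : |z.re| ≤ Complex.abs z := Complex.abs_re_le_norm z

lemma Complex.normSq_eq_abs (z : ℂ) : normSq z = Complex.abs z ^ 2 := (Complex.sq_abs z).symm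

lemma Peval (ζ : ℝ) (z : ℂ) (n : ℕ) :
    (Ppoly ζ (n+1)).eval z = ((ζ:ℂ) * (Qpoly ζ n).eval z + z * (Ppoly ζ n).eval z)^2 := by
  simp [Ppoly, Qpoly, PQ]

lemma Qeval (ζ : ℝ) (z : ℂ) (n : ℕ) :
    (Qpoly ζ (n+1)).eval z = ((Qpoly ζ n).eval z + (ζ:ℂ) * (z * (Ppoly ζ n).eval z))^2 := by
  simp [Ppoly, Qpoly, PQ]

lemma Reval (ζ : ℝ) (z : ℂ) (n : ℕ) :
    (Rpoly ζ n).eval z = (ζ:ℂ) * (z * (Ppoly ζ n).eval z) + (Qpoly ζ n).eval z := by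
  simp [Rpoly]

lemma Qeval0 (ζ : ℝ) (n : ℕ) : (Qpoly ζ n).eval 0 = 1 := by
  induction n with
  | zero => simp [Qpoly, PQ]
  | succ n ih => rw [Qeval, ih]; ring

lemma Rpoly_ne_zero (ζ : ℝ) (n : ℕ) : Rpoly ζ n ≠ 0 := by
  intro h
  have h1 : (Rpoly ζ n).eval 0 = 1 := by
    rw [Reval, Qeval0]; ring
  rw [h] at h1
  simp at h1


noncomputable def pdist (a b : ℂ) : ℝ :=
  Complex.abs (a - b) / Complex.abs (1 - (starRingEnd ℂ) a * b)

private lemma one_sub_abs_le (w : ℂ) : 1 - Complex.abs w ≤ Complex.abs (1 - w) := by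
  have h : (1:ℝ) = Complex.abs ((1 - w) + w) := by norm_num
  have h2 := Complex.abs.add_le (1 - w) w
  linarith [h ▸ h2]

private lemma denom_lb (a b : ℂ) :
    1 - Complex.abs a * Complex.abs b ≤ Complex.abs (1 - (starRingEnd ℂ) a * b) := by
  have := one_sub_abs_le ((starRingEnd ℂ) a * b)
  simpa [map_mul, Complex.abs_conj] using this

private lemma denom_pos {a b : ℂ} (ha : Complex.abs a < 1) (hb : Complex.abs b ≤ 1) :
    0 < Complex.abs (1 - (starRingEnd ℂ) a * b) := by
  have h := denom_lb a b
  nlinarith [Complex.abs.nonneg a, Complex.abs.nonneg b]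

private lemma nsqA (a b : ℂ) :
    normSq (1 - (starRingEnd ℂ) a * b) - normSq (a - b)
      = (1 - normSq a) * (1 - normSq b) := by
  simp only [normSq_apply, sub_re, sub_im, mul_re, mul_im, one_re, one_im, conj_re, conj_im]
  ring

/-- key scaling inequality: `(1+e)|1-w| ≤ 2|1-e w|` for `0 ≤ e ≤ 1`, `|w| ≤ 1`. -/
private lemma scale_key {e : ℝ} {w : ℂ} (he0 : 0 ≤ e) (he1 : e ≤ 1)
    (hw : Complex.abs w ≤ 1) :
    (1+e) * Complex.abs (1-w) ≤ 2 * Complex.abs (1 - (e:ℂ)*w) := by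
  have haw : 0 ≤ Complex.abs w := Complex.abs.nonneg w
  have hc : |w.re| ≤ Complex.abs w := Complex.abs_re_le_abs w
  have hc' : -(Complex.abs w) ≤ w.re := by cases abs_le.mp hc; linarith
  -- squares
  have hs1 : (Complex.abs (1-w))^2 = 1 - 2*w.re + (Complex.abs w)^2 := by
    rw [Complex.sq_abs, Complex.sq_abs]
    simp only [normSq_apply, sub_re, sub_im, one_re, one_im]
    ring
  have hs2 : (Complex.abs (1 - (e:ℂ)*w))^2 = 1 - 2*e*w.re + e^2*(Complex.abs w)^2 := by
    rw [Complex.sq_abs, Complex.sq_abs]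
    simp only [normSq_apply, sub_re, sub_im, one_re, one_im, mul_re, mul_im, ofReal_re, ofReal_im]
    ring
  have h1 : 0 ≤ (1-e)*(1-Complex.abs w) * (2*(1+e*Complex.abs w) + (1+e)*(1+Complex.abs w)) := by
    have : 0 ≤ (1-e)*(1-Complex.abs w) := mul_nonneg (by linarith) (by linarith)
    nlinarith
  have h2 : 0 ≤ 2*(1-e)^2*(w.re + Complex.abs w) := by nlinarith [sq_nonneg (1-e)]
  have hL : 0 ≤ (1+e) * Complex.abs (1-w) :=
    mul_nonneg (by linarith) (Complex.abs.nonneg _)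
  have hR : 0 ≤ 2 * Complex.abs (1 - (e:ℂ)*w) := by positivity
  nlinarith [hs1, hs2, sq_nonneg (Complex.abs (1-w)), sq_nonneg (Complex.abs (1 - (e:ℂ)*w))]

private lemma mob_den_ne {ζ : ℝ} {a : ℂ} (hζ0 : 0 < ζ) (hζ1 : ζ < 1)
    (ha : Complex.abs a < 1) : (1 + (ζ:ℂ)*a) ≠ 0 := by
  intro h
  have : Complex.abs ((ζ:ℂ)*a) = ζ * Complex.abs a := by
    rw [map_mul, Complex.abs_ofReal, abs_of_pos hζ0]
  have h2 : (ζ:ℂ)*a = -1 := by linear_combination h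
  rw [h2] at this
  simp at this
  nlinarith [Complex.abs.nonneg a]

private lemma mob_lt {ζ : ℝ} {a : ℂ} (hζ0 : 0 < ζ) (hζ1 : ζ < 1)
    (ha : Complex.abs a < 1) : Complex.abs ((a + ζ)/(1 + (ζ:ℂ)*a)) < 1 := by
  have hden := mob_den_ne hζ0 hζ1 ha
  have hkey : normSq (1 + (ζ:ℂ)*a) - normSq (a + (ζ:ℂ)) = (1 - ζ^2) * (1 - normSq a) := by
    simp only [normSq_apply, add_re, add_im, mul_re, mul_im, ofReal_re, ofReal_im, one_re, one_im]
    ring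
  have hnsa : normSq a < 1 := by
    rw [← Complex.sq_abs]; nlinarith [Complex.abs.nonneg a]
  have habs : 0 < Complex.abs (1 + (ζ:ℂ)*a) := Complex.abs.pos hden
  rw [map_div₀, div_lt_one habs]
  apply lt_of_pow_lt_pow_left₀ 2 (Complex.abs.nonneg _)
  rw [Complex.sq_abs, Complex.sq_abs]
  nlinarith [mul_pos (show (0:ℝ) < 1-ζ^2 by nlinarith) (show (0:ℝ) < 1 - normSq a by linarith)]

private lemma scale_key2 {n : ℝ} {w : ℂ} (hn : 1 ≤ n) (hw : Complex.abs w ≤ 1) :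
    (n+1) * Complex.abs (1-w) ≤ 2 * Complex.abs ((n:ℂ) - w) := by
  have haw : 0 ≤ Complex.abs w := Complex.abs.nonneg w
  have hc : |w.re| ≤ Complex.abs w := Complex.abs_re_le_abs w
  have hc' : -(Complex.abs w) ≤ w.re := by cases abs_le.mp hc; linarith
  have hs1 : (Complex.abs (1-w))^2 = 1 - 2*w.re + (Complex.abs w)^2 := by
    rw [Complex.sq_abs, Complex.sq_abs]
    simp only [normSq_apply, sub_re, sub_im, one_re, one_im]
    ring
  have hs2 : (Complex.abs ((n:ℂ)-w))^2 = n^2 - 2*n*w.re + (Complex.abs w)^2 := by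
    rw [Complex.sq_abs, Complex.sq_abs]
    simp only [normSq_apply, sub_re, sub_im, ofReal_re, ofReal_im]
    ring
  have h1 : 0 ≤ (n-1)*(1-Complex.abs w) * (2*(n+Complex.abs w) + (n+1)*(1+Complex.abs w)) :=
    mul_nonneg (mul_nonneg (by linarith) (by linarith)) (by nlinarith)
  have h2 : 0 ≤ 2*(n-1)^2*(w.re + Complex.abs w) := by nlinarith [sq_nonneg (n-1)]
  have hL : 0 ≤ (n+1) * Complex.abs (1-w) :=
    mul_nonneg (by linarith) (Complex.abs.nonneg _)
  have hR : 0 ≤ 2 * Complex.abs ((n:ℂ)-w) := by positivity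
  nlinarith [hs1, hs2]

private lemma pd_le {a b : ℂ} {t : ℝ} (ht : t < 1)
    (ha : Complex.abs a ≤ t) (hb : Complex.abs b ≤ t) :
    pdist a b ≤ 2*t/(1-t^2) := by
  have ht0 : 0 ≤ t := le_trans (Complex.abs.nonneg a) ha
  have hnum : Complex.abs (a - b) ≤ 2*t := by
    have := Complex.abs.sub_le_add a b
    linarith [Complex.abs.sub_le_add a b]
  have hden : 1 - t^2 ≤ Complex.abs (1 - (starRingEnd ℂ) a * b) := by
    have h := denom_lb a b
    nlinarith [Complex.abs.nonneg a, Complex.abs.nonneg b]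
  exact div_le_div₀ (by positivity) hnum (by nlinarith) hden

private lemma abs_le_of_nsq_le {x y : ℂ} (h : normSq x ≤ normSq y) :
    Complex.abs x ≤ Complex.abs y := by
  rw [Complex.abs_apply, Complex.abs_apply]
  exact Real.sqrt_le_sqrt h

private lemma pd_sq {a b : ℂ} (ha : Complex.abs a < 1) (hb : Complex.abs b < 1) :
    pdist (a^2) (b^2) ≤ pdist a b := by
  have hfac1 : a^2 - b^2 = (a-b)*(a+b) := by ring
  have hfac2 : 1 - (starRingEnd ℂ) (a^2) * b^2
      = (1 - (starRingEnd ℂ) a * b) * (1 + (starRingEnd ℂ) a * b) := by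
    rw [map_pow]; ring
  have hXY : Complex.abs (a+b) ≤ Complex.abs (1 + (starRingEnd ℂ) a * b) := by
    apply abs_le_of_nsq_le
    have h := nsqA (-a) b
    have e1 : 1 - (starRingEnd ℂ) (-a) * b = 1 + (starRingEnd ℂ) a * b := by
      rw [map_neg]; ring
    have e2 : normSq (-a - b) = normSq (a+b) := by
      rw [show (-a - b) = -(a+b) by ring, normSq_neg]
    rw [e1, e2, normSq_neg] at h
    have ha' : normSq a ≤ 1 := by
      rw [← Complex.sq_abs]; nlinarith [Complex.abs.nonneg a]
    have hb' : normSq b ≤ 1 := by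
      rw [← Complex.sq_abs]; nlinarith [Complex.abs.nonneg b]
    nlinarith [h]
  have hD : 0 < Complex.abs (1 - (starRingEnd ℂ) a * b) := denom_pos ha hb.le
  have hY : 0 < Complex.abs (1 + (starRingEnd ℂ) a * b) := by
    have h := denom_lb (-a) b
    have e1 : 1 - (starRingEnd ℂ) (-a) * b = 1 + (starRingEnd ℂ) a * b := by
      rw [map_neg]; ring
    rw [e1] at h
    simp only [map_neg, Complex.abs.map_neg] at h
    nlinarith [Complex.abs.nonneg a, Complex.abs.nonneg b]
  unfold pdist
  rw [hfac1, hfac2, map_mul, map_mul]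
  rw [div_le_div_iff₀ (by positivity) hD]
  have hN : 0 ≤ Complex.abs (a-b) := Complex.abs.nonneg _
  nlinarith [mul_le_mul_of_nonneg_left hXY hN, mul_le_mul_of_nonneg_right
    (mul_le_mul_of_nonneg_left hXY hN) hD.le]

private lemma pd_mob {ζ : ℝ} (hζ0 : 0 < ζ) (hζ1 : ζ < 1) {a b : ℂ}
    (ha : Complex.abs a < 1) (hb : Complex.abs b < 1) :
    pdist ((a + ζ)/(1 + (ζ:ℂ)*a)) ((b + ζ)/(1 + (ζ:ℂ)*b)) = pdist a b := by
  have hda : (1 + (ζ:ℂ)*a) ≠ 0 := mob_den_ne hζ0 hζ1 ha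
  have hdb : (1 + (ζ:ℂ)*b) ≠ 0 := mob_den_ne hζ0 hζ1 hb
  have hda' : (1 + (ζ:ℂ)*((starRingEnd ℂ) a)) ≠ 0 :=
    mob_den_ne hζ0 hζ1 (by rwa [Complex.abs_conj])
  have hc : ((1:ℂ)-(ζ:ℂ)^2) ≠ 0 := by
    intro h
    have : ((1 - ζ^2 : ℝ) : ℂ) = 0 := by push_cast; linear_combination h
    have h2 : (1 - ζ^2 : ℝ) = 0 := by exact_mod_cast this
    nlinarith
  have hnum : (a+ζ)/(1+(ζ:ℂ)*a) - (b+ζ)/(1+(ζ:ℂ)*b)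
      = ((1:ℂ)-(ζ:ℂ)^2)*(a-b)/((1+(ζ:ℂ)*a)*(1+(ζ:ℂ)*b)) := by
    rw [div_sub_div _ _ hda hdb]; congr 1
    ring
  have hconj : (starRingEnd ℂ) ((a+ζ)/(1+(ζ:ℂ)*a))
      = (((starRingEnd ℂ) a)+ζ)/(1+(ζ:ℂ)*((starRingEnd ℂ) a)) := by
    simp [map_div₀, map_add, map_mul, map_one, Complex.conj_ofReal]
  have hden : 1 - (starRingEnd ℂ) ((a+ζ)/(1+(ζ:ℂ)*a)) * ((b+ζ)/(1+(ζ:ℂ)*b))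
      = ((1:ℂ)-(ζ:ℂ)^2)*(1 - (starRingEnd ℂ) a * b)/((1+(ζ:ℂ)*((starRingEnd ℂ) a))*(1+(ζ:ℂ)*b)) := by
    rw [hconj]
    rw [div_mul_div_comm, one_sub_div (mul_ne_zero hda' hdb)]; congr 1
    ring
  have habsc : Complex.abs ((1:ℂ)-(ζ:ℂ)^2) = 1 - ζ^2 := by
    rw [show ((1:ℂ)-(ζ:ℂ)^2) = (((1-ζ^2:ℝ)):ℂ) by push_cast; ring, Complex.abs_ofReal,
      abs_of_pos (by nlinarith)]
  have habsconj : Complex.abs (1+(ζ:ℂ)*((starRingEnd ℂ) a)) = Complex.abs (1+(ζ:ℂ)*a) := by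
    rw [show (1+(ζ:ℂ)*((starRingEnd ℂ) a)) = (starRingEnd ℂ) (1+(ζ:ℂ)*a) by
      simp [map_add, map_mul, Complex.conj_ofReal], Complex.abs_conj]
  have hD : 0 < Complex.abs (1 - (starRingEnd ℂ) a * b) := denom_pos ha hb.le
  have hKa : 0 < Complex.abs (1+(ζ:ℂ)*a) := Complex.abs.pos hda
  have hKb : 0 < Complex.abs (1+(ζ:ℂ)*b) := Complex.abs.pos hdb
  unfold pdist
  rw [hnum, hden, map_div₀, map_div₀, map_mul, map_mul, map_mul, map_mul, habsc, habsconj]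
  rw [div_div_div_cancel_right₀]
  · rw [mul_div_mul_left _ _ (by nlinarith : (1:ℝ)-ζ^2 ≠ 0)]
  · positivity

private lemma pd_scale {A B z : ℂ} (hz : 1 ≤ Complex.abs z)
    (hA : Complex.abs A ≤ 1) (hB : Complex.abs B ≤ 1)
    (hAB : 0 < Complex.abs (1 - (starRingEnd ℂ) A * B)) :
    pdist (A/z) (B/z) ≤ (2 * Complex.abs z/((Complex.abs z)^2+1)) * pdist A B := by
  have hzne : z ≠ 0 := by
    intro h; rw [h] at hz; simp at hz; linarith
  have hs : 0 < Complex.abs z := lt_of_lt_of_le one_pos hz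
  have hn1 : 1 ≤ normSq z := by rw [Complex.normSq_eq_abs]; nlinarith
  have hnpos : (0:ℝ) < normSq z := by linarith
  have e1 : A/z - B/z = (A-B)/z := by ring
  have hnsqc : ((normSq z : ℝ):ℂ) = (starRingEnd ℂ) z * z := by
    rw [mul_comm, Complex.mul_conj]
  have e2 : 1 - (starRingEnd ℂ) (A/z) * (B/z)
      = (((normSq z : ℝ):ℂ) - (starRingEnd ℂ) A * B)/((normSq z : ℝ):ℂ) := by
    rw [map_div₀, hnsqc]
    have hcz : (starRingEnd ℂ) z ≠ 0 := by simpa using hzne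
    field_simp
  set w : ℂ := (starRingEnd ℂ) A * B with hw
  have hwle : Complex.abs w ≤ 1 := by
    rw [hw, map_mul, Complex.abs_conj]
    exact mul_le_one₀ hA (Complex.abs.nonneg B) hB
  have hkey := scale_key2 hn1 hwle
  have hEpos : 0 < Complex.abs (((normSq z : ℝ):ℂ) - w) := by nlinarith
  unfold pdist
  rw [e1, e2, map_div₀, map_div₀, Complex.abs_ofReal, abs_of_pos hnpos]
  set M := Complex.abs (A - B)
  set D := Complex.abs (1 - w)
  set E := Complex.abs (((normSq z : ℝ):ℂ) - w)
  set s := Complex.abs z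
  have hM : 0 ≤ M := Complex.abs.nonneg _
  have hns : normSq z = s^2 := by rw [Complex.normSq_eq_abs]
  rw [hns] at hkey
  have lhs_eq : M / s / (E / normSq z) = M * s / E := by
    rw [hns]
    field_simp
  rw [lhs_eq, div_le_iff₀ hEpos, mul_comm (2*s/(s^2+1)) (M/D)]
  have hDne : D ≠ 0 := ne_of_gt hAB
  have hs1ne : s^2+1 ≠ 0 := by positivity
  have heq : M / D * (2 * s / (s ^ 2 + 1)) * E = M * (2*s*E) / (D*(s^2+1)) := by
    field_simp
  rw [heq, le_div_iff₀ (by positivity)]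
  nlinarith [mul_le_mul_of_nonneg_left hkey (mul_nonneg hM hs.le)]

private lemma nsqB' (c : ℝ) (u v : ℂ) :
    normSq (v + c*u) - normSq (c*v + u) = (1 - c^2) * (normSq v - normSq u) := by
  simp only [normSq_apply, add_re, add_im, mul_re, mul_im, ofReal_re, ofReal_im]
  ring

lemma no_root_near (ζ : ℝ) (hζ0 : 0 < ζ) (hζ1 : ζ < 1) (z : ℂ)
    (hz : Complex.abs z < 1) (n : ℕ) : (Rpoly ζ n).eval z ≠ 0 := by
  set u : ℕ → ℂ := fun m => z * (Ppoly ζ m).eval z with hudef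
  set v : ℕ → ℂ := fun m => (Qpoly ζ m).eval z with hvdef
  have key : ∀ m, Complex.abs (u m) < Complex.abs (v m) := by
    intro m
    induction m with
    | zero =>
      simp only [hudef, hvdef, Ppoly, Qpoly, PQ, Polynomial.eval_one, mul_one]
      simpa using hz
    | succ m ih =>
      have hu1 : u (m+1) = z * ((ζ:ℂ)*(v m) + u m)^2 := by
        simp only [hudef, hvdef, Peval]
      have hv1 : v (m+1) = (v m + (ζ:ℂ)*(u m))^2 := by
        simp only [hudef, hvdef, Qeval]
      have hnsq : normSq ((ζ:ℂ)*(v m) + u m) < normSq (v m + (ζ:ℂ)*(u m)) := by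
        have h := nsqB' ζ (u m) (v m)
        have h2 : normSq (u m) < normSq (v m) := by
          rw [← Complex.sq_abs, ← Complex.sq_abs]
          nlinarith [Complex.abs.nonneg (u m), Complex.abs.nonneg (v m)]
        nlinarith [mul_pos (show (0:ℝ) < 1 - ζ^2 by nlinarith)
          (show (0:ℝ) < normSq (v m) - normSq (u m) by linarith)]
      have hvpos : 0 < normSq (v m + (ζ:ℂ)*(u m)) :=
        lt_of_le_of_lt (normSq_nonneg _) hnsq
      rw [hu1, hv1, map_mul, map_pow, map_pow]
      have e1 : (Complex.abs ((ζ:ℂ)*(v m) + u m))^2 = normSq ((ζ:ℂ)*(v m) + u m) :=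
        Complex.sq_abs _
      have e2 : (Complex.abs (v m + (ζ:ℂ)*(u m)))^2 = normSq (v m + (ζ:ℂ)*(u m)) :=
        Complex.sq_abs _
      nlinarith [Complex.abs.nonneg z, e1, e2, hnsq, hvpos,
        mul_nonneg (sub_nonneg.2 hz.le) (normSq_nonneg ((ζ:ℂ)*(v m) + u m))]
  intro hroot
  rw [Reval] at hroot
  have h := key n
  have hv : v n = -((ζ:ℂ) * u n) := by
    simp only [hudef, hvdef] at *
    linear_combination hroot
  have habs : Complex.abs (v n) = ζ * Complex.abs (u n) := by
    rw [hv, Complex.abs.map_neg, map_mul, Complex.abs_ofReal, abs_of_pos hζ0]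
  nlinarith [Complex.abs.nonneg (u n)]

lemma no_root_far (ζ : ℝ) (hζ0 : 0 < ζ) (hζ1 : ζ < 1) (ρ : ℝ) (hρ : 1 < ρ)
    (N n : ℕ) (hNn : N ≤ n)
    (hN : (2*ρ/(ρ^2-1)) * (2*ρ/(ρ^2+1))^N < ζ)
    (z : ℂ) (hz : ρ ≤ Complex.abs z) :
    (Rpoly ζ n).eval z ≠ 0 := by
  intro hroot
  have hs1 : 1 < Complex.abs z := lt_of_lt_of_le hρ hz
  have hs0 : 0 < Complex.abs z := by linarith
  have hzne : z ≠ 0 := Complex.abs.pos_iff.mp hs0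
  set s : ℝ := Complex.abs z with hsdef
  set t : ℝ := 1/s with htdef
  have ht0 : 0 < t := by positivity
  have ht1 : t < 1 := by rw [htdef]; rw [div_lt_one hs0]; linarith
  have hts : t * s = 1 := by rw [htdef]; field_simp
  set u : ℕ → ℂ := fun m => z * (Ppoly ζ m).eval z with hudef
  set v : ℕ → ℂ := fun m => (Qpoly ζ m).eval z with hvdef
  have hu1 : ∀ m, u (m+1) = z * ((ζ:ℂ)*(v m) + u m)^2 := by
    intro m; simp only [hudef, hvdef, Peval]
  have hv1 : ∀ m, v (m+1) = (v m + (ζ:ℂ)*(u m))^2 := by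
    intro m; simp only [hudef, hvdef, Qeval]
  -- main induction
  have key : ∀ m, u m ≠ 0 ∧ Complex.abs (v m) ≤ t * Complex.abs (u m) := by
    intro m
    induction m with
    | zero =>
      constructor
      · simp only [hudef, Ppoly, PQ, Polynomial.eval_one, mul_one]; exact hzne
      · simp only [hudef, hvdef, Ppoly, Qpoly, PQ, Polynomial.eval_one, mul_one, map_one]
        rw [htdef]; rw [← hsdef]; field_simp
        exact le_rfl
    | succ m ih =>
      obtain ⟨hum, hvm⟩ := ih
      have habsu : 0 < Complex.abs (u m) := Complex.abs.pos hum
      have hwne : (ζ:ℂ)*(v m) + u m ≠ 0 := by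
        intro h
        have h2 : u m = -((ζ:ℂ)*(v m)) := by linear_combination h
        have h3 : Complex.abs (u m) = ζ * Complex.abs (v m) := by
          rw [h2, Complex.abs.map_neg, map_mul, Complex.abs_ofReal, abs_of_pos hζ0]
        nlinarith [Complex.abs.nonneg (v m)]
      constructor
      · rw [hu1 m]; exact mul_ne_zero hzne (pow_ne_zero 2 hwne)
      · have hnsq : normSq (v m + (ζ:ℂ)*(u m)) ≤ normSq ((ζ:ℂ)*(v m) + u m) := by
          have h := nsqB' ζ (u m) (v m)
          have hle : Complex.abs (v m) ≤ Complex.abs (u m) :=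
            le_trans hvm (by nlinarith)
          have h2 : normSq (v m) ≤ normSq (u m) := by
            rw [← Complex.sq_abs, ← Complex.sq_abs]
            nlinarith [pow_le_pow_left₀ (Complex.abs.nonneg (v m)) hle 2]
          nlinarith [mul_nonneg (show (0:ℝ) ≤ 1 - ζ^2 by nlinarith)
            (show (0:ℝ) ≤ normSq (u m) - normSq (v m) by linarith)]
        have habs2 : Complex.abs (v m + (ζ:ℂ)*(u m)) ≤ Complex.abs ((ζ:ℂ)*(v m) + u m) :=
          abs_le_of_nsq_le hnsq
        rw [hu1 m, hv1 m, map_mul, map_pow, map_pow, ← hsdef]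
        have : t * (s * Complex.abs ((ζ:ℂ)*(v m) + u m) ^ 2)
            = Complex.abs ((ζ:ℂ)*(v m) + u m) ^ 2 := by
          rw [← mul_assoc, hts, one_mul]
        rw [this]
        exact pow_le_pow_left₀ (Complex.abs.nonneg _) habs2 2
  set r : ℕ → ℂ := fun m => v m / u m with hrdef
  have hrabs : ∀ m, Complex.abs (r m) ≤ t := by
    intro m
    obtain ⟨h1, h2⟩ := key m
    rw [hrdef]
    simp only [map_div₀]
    rw [div_le_iff₀ (Complex.abs.pos h1)]
    linarith [h2]
  have hrlt : ∀ m, Complex.abs (r m) < 1 := fun m => lt_of_le_of_lt (hrabs m) ht1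
  -- recursion for r
  have hwne' : ∀ m, (ζ:ℂ)*(v m) + u m ≠ 0 := by
    intro m
    obtain ⟨hum, hvm⟩ := key m
    intro h
    have h2 : u m = -((ζ:ℂ)*(v m)) := by linear_combination h
    have h3 : Complex.abs (u m) = ζ * Complex.abs (v m) := by
      rw [h2, Complex.abs.map_neg, map_mul, Complex.abs_ofReal, abs_of_pos hζ0]
    have habsu : 0 < Complex.abs (u m) := Complex.abs.pos hum
    nlinarith [Complex.abs.nonneg (v m)]
  have hrrec : ∀ m, r (m+1) = ((r m + ζ)/(1 + (ζ:ℂ)*(r m)))^2 / z := by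
    intro m
    have hum := (key m).1
    have hw := hwne' m
    have hden : 1 + (ζ:ℂ)*(r m) ≠ 0 := mob_den_ne hζ0 hζ1 (hrlt m)
    rw [hrdef]
    simp only []
    rw [hu1 m, hv1 m]
    have hdd : (1 + (ζ:ℂ)*(v m / u m)) = ((ζ:ℂ)*(v m) + u m)/u m := by
      field_simp; ring
    have hnn : (v m / u m + (ζ:ℂ)) = (v m + (ζ:ℂ)*(u m))/u m := by
      field_simp
    rw [hdd, hnn, div_div_div_cancel_right₀ hum, div_pow, div_div]
    rw [mul_comm z ((↑ζ * v m + u m)^2)]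
  -- contraction
  set k : ℝ := 2*s/(s^2+1) with hkdef
  have hk0 : 0 ≤ k := by positivity
  have hstep : ∀ m, pdist (r (m+2)) (r (m+1)) ≤ k * pdist (r (m+1)) (r m) := by
    intro m
    have hA : Complex.abs ((r (m+1) + ζ)/(1 + (ζ:ℂ)*(r (m+1)))) < 1 :=
      mob_lt hζ0 hζ1 (hrlt (m+1))
    have hB : Complex.abs ((r m + ζ)/(1 + (ζ:ℂ)*(r m))) < 1 :=
      mob_lt hζ0 hζ1 (hrlt m)
    have hA2 : Complex.abs (((r (m+1) + ζ)/(1 + (ζ:ℂ)*(r (m+1))))^2) < 1 := by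
      rw [map_pow]; exact pow_lt_one₀ (Complex.abs.nonneg _) hA (by norm_num)
    have hB2 : Complex.abs (((r m + ζ)/(1 + (ζ:ℂ)*(r m)))^2) < 1 := by
      rw [map_pow]; exact pow_lt_one₀ (Complex.abs.nonneg _) hB (by norm_num)
    have eL : pdist (r (m+2)) (r (m+1))
        = pdist (((r (m+1) + ζ)/(1 + (ζ:ℂ)*(r (m+1))))^2/z)
            (((r m + ζ)/(1 + (ζ:ℂ)*(r m)))^2/z) := by
      conv_lhs => rw [hrrec m, hrrec (m+1)]
    rw [eL]
    calc pdist (((r (m+1) + ζ)/(1 + (ζ:ℂ)*(r (m+1))))^2/z)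
            (((r m + ζ)/(1 + (ζ:ℂ)*(r m)))^2/z)
        ≤ (2 * Complex.abs z/((Complex.abs z)^2+1))
            * pdist (((r (m+1) + ζ)/(1 + (ζ:ℂ)*(r (m+1))))^2)
                (((r m + ζ)/(1 + (ζ:ℂ)*(r m)))^2) :=
          pd_scale hs1.le hA2.le hB2.le (denom_pos hA2 hB2.le)
      _ = k * pdist (((r (m+1) + ζ)/(1 + (ζ:ℂ)*(r (m+1))))^2)
                (((r m + ζ)/(1 + (ζ:ℂ)*(r m)))^2) := by rw [hkdef, hsdef]
      _ ≤ k * pdist ((r (m+1) + ζ)/(1 + (ζ:ℂ)*(r (m+1))))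
                ((r m + ζ)/(1 + (ζ:ℂ)*(r m))) :=
          mul_le_mul_of_nonneg_left (pd_sq hA hB) hk0
      _ = k * pdist (r (m+1)) (r m) := by
          rw [pd_mob hζ0 hζ1 (hrlt (m+1)) (hrlt m)]
  -- geometric decay
  have hgeo : ∀ m, pdist (r (m+1)) (r m) ≤ k^m * (2*t/(1-t^2)) := by
    intro m
    induction m with
    | zero =>
      simpa using pd_le ht1 (hrabs 1) (hrabs 0)
    | succ m ih =>
      calc pdist (r (m+2)) (r (m+1)) ≤ k * pdist (r (m+1)) (r m) := hstep m
        _ ≤ k * (k^m * (2*t/(1-t^2))) := mul_le_mul_of_nonneg_left ih hk0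
        _ = k^(m+1) * (2*t/(1-t^2)) := by ring
  -- the root gives pdist = ζ
  rw [Reval] at hroot
  have hun := (key n).1
  have hvn : v n = -((ζ:ℂ) * u n) := by
    simp only [hudef, hvdef] at *
    linear_combination hroot
  have hrn : r n = -(ζ:ℂ) := by
    rw [hrdef]
    simp only []
    rw [hvn]
    field_simp
  have hrn1 : r (n+1) = 0 := by
    rw [hrdef]
    simp only []
    rw [hv1 n, hvn]
    norm_num
  have hpd : pdist (r (n+1)) (r n) = ζ := by
    rw [hrn1, hrn]
    simp [pdist, Complex.abs_ofReal]
    exact hζ0.le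
  have hb := hgeo n
  clear_value r u v k t s
  have htρ : t ≤ 1/ρ := by
    rw [htdef]
    exact one_div_le_one_div_of_le (by linarith) hz
  have htρ1 : t*ρ ≤ 1 := by
    calc t*ρ ≤ (1/ρ)*ρ := mul_le_mul_of_nonneg_right htρ (by linarith)
      _ = 1 := by field_simp
  have hC : 2*t/(1-t^2) ≤ 2*ρ/(ρ^2-1) := by
    rw [div_le_div_iff₀ (by nlinarith only [ht0, ht1]) (by nlinarith only [hρ])]
    linarith only [mul_nonneg (sub_nonneg.2 htρ1)
      (show (0:ℝ) ≤ ρ + t by linarith only [ht0, hρ])]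
  have hsρ : (0:ℝ) ≤ s*ρ - 1 := by nlinarith only [hs1, hρ]
  have hk : k ≤ 2*ρ/(ρ^2+1) := by
    rw [hkdef, div_le_div_iff₀ (by positivity) (by positivity)]
    linarith only [mul_nonneg (sub_nonneg.2 hz) hsρ]
  have hk1 : 2*ρ/(ρ^2+1) ≤ 1 := by
    rw [div_le_one (by positivity)]
    nlinarith only [hρ]
  have hk00 : (0:ℝ) ≤ 2*ρ/(ρ^2+1) := by positivity
  have hCpos : (0:ℝ) ≤ 2*t/(1-t^2) :=
    div_nonneg (by linarith only [ht0]) (by nlinarith only [ht0, ht1])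
  have hfin : ζ < ζ := by
    calc ζ = pdist (r (n+1)) (r n) := hpd.symm
      _ ≤ k^n * (2*t/(1-t^2)) := hb
      _ ≤ (2*ρ/(ρ^2+1))^n * (2*ρ/(ρ^2-1)) :=
          mul_le_mul (pow_le_pow_left₀ hk0 hk n) hC hCpos (pow_nonneg hk00 n)
      _ ≤ (2*ρ/(ρ^2+1))^N * (2*ρ/(ρ^2-1)) :=
          mul_le_mul_of_nonneg_right (pow_le_pow_of_le_one hk00 hk1 hNn)
            (div_nonneg (by linarith only [hρ]) (by nlinarith only [hρ]))
      _ = (2*ρ/(ρ^2-1)) * (2*ρ/(ρ^2+1))^N := by ring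
      _ < ζ := hN
  exact lt_irrefl ζ hfin

/-- Every accumulation point of `𝒵 = ⋃ₙ 𝒵ₙ` lies on the unit circle. -/
theorem stmt8 (ζ : ℝ) (hζ0 : 0 < ζ) (hζ1 : ζ < 1) (z : ℂ)
    (hz : z ∈ closure (ZsetAll ζ)) (hz' : z ∉ ZsetAll ζ) :
    ‖z‖ = 1 := by
  change Complex.abs z = 1
  rcases lt_trichotomy (Complex.abs z) 1 with hlt | heq | hgt
  · exfalso
    have hopen : IsOpen {w : ℂ | Complex.abs w < 1} :=
      isOpen_lt Complex.continuous_abs continuous_const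
    obtain ⟨w, hwo, hws⟩ := mem_closure_iff.mp hz _ hopen hlt
    obtain ⟨m, hm⟩ := Set.mem_iUnion.mp hws
    exact no_root_near ζ hζ0 hζ1 w hwo m hm
  · exact heq
  · exfalso
    set ρ : ℝ := (1 + Complex.abs z)/2 with hρdef
    have hρ1 : 1 < ρ := by rw [hρdef]; linarith
    have hρz : ρ < Complex.abs z := by rw [hρdef]; linarith
    have hCpos : (0:ℝ) < 2*ρ/(ρ^2-1) := div_pos (by linarith) (by nlinarith)
    have hk1 : 2*ρ/(ρ^2+1) < 1 := by
      rw [div_lt_one (by positivity)]; nlinarith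
    obtain ⟨N, hNlt⟩ := exists_pow_lt_of_lt_one
      (div_pos hζ0 hCpos) hk1
    have hN : (2*ρ/(ρ^2-1)) * (2*ρ/(ρ^2+1))^N < ζ := by
      rw [mul_comm]
      exact (lt_div_iff₀ hCpos).mp hNlt
    have hSfin : (⋃ m ∈ Finset.range N, Zset ζ m).Finite := by
      apply Set.Finite.biUnion (Finset.finite_toSet _)
      intro m _
      exact Polynomial.finite_setOf_isRoot (Rpoly_ne_zero ζ m)
    have hSclosed : IsClosed (⋃ m ∈ Finset.range N, Zset ζ m) := hSfin.isClosed
    have hzS : z ∉ (⋃ m ∈ Finset.range N, Zset ζ m) := by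
      intro hmem
      simp only [Set.mem_iUnion, exists_prop] at hmem
      obtain ⟨m, -, hm⟩ := hmem
      exact hz' (Set.mem_iUnion.mpr ⟨m, hm⟩)
    have hopen : IsOpen ({w : ℂ | ρ < Complex.abs w}
        ∩ (⋃ m ∈ Finset.range N, Zset ζ m)ᶜ) :=
      (isOpen_lt continuous_const Complex.continuous_abs).inter hSclosed.isOpen_compl
    obtain ⟨w, ⟨hw1, hw2⟩, hw3⟩ := mem_closure_iff.mp hz _ hopen ⟨hρz, hzS⟩
    obtain ⟨m, hm⟩ := Set.mem_iUnion.mp hw3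
    rcases lt_or_ge m N with hmN | hmN
    · exact hw2 (Set.mem_biUnion (Finset.mem_range.mpr hmN) hm)
    · exact no_root_far ζ hζ0 hζ1 ρ hρ1 N m hmN hN w (le_of_lt hw1) hm
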